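/- The function r(x) = -5/12 + 360x is a rational (indeed polynomial) solution of the Riccati equation with parameter λ = 25/144: for every real x with x ≠ 0 and x ≠ 1/432, one has r'(x) + r(x)²/((1-432x)x) - 60 = (25/144)·(1/((1-432x)x)). -/

import Mathlib

/-- The function `r(x) = -5/12 + 360x` is a (polynomial, hence rational) solution of the
Riccati equation `r'(x) + C_x r(x)^2 - 60 = λ C_x` with `C_x = 1/((1-432x)x)` and
`λ = 25/144`, for every real `x ≠ 0`, `x ≠ 1/432`. -/
theorem riccati_solution_lambda_25_over_144 :
    ∀ x : ℝ, x ≠ 0 → x ≠ 1 / 432 →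
      deriv (fun y : ℝ => -5/12 + 360 * y) x
        + (-5/12 + 360 * x) ^ 2 / ((1 - 432 * x) * x) - 60
      = (25 / 144) * (1 / ((1 - 432 * x) * x)) := by
  intro x hx h432
  have hd : deriv (fun y : ℝ => -5/12 + 360 * y) x = 360 := by
    simpa using (((hasDerivAt_id x).const_mul (360:ℝ)).const_add (-5/12 : ℝ)).deriv
  have h1 : (1 - 432 * x) ≠ 0 := by
    intro h
    apply h432
    field_simp at h ⊢
    linarith
  rw [hd]
  have h2 : (1 - x * 432) ≠ 0 := by rwa [mul_comm]
  field_simp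
  ring
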